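/- In the canonical model built from a maximal consistent set z (with domain Δ the R-equivalence class of z and x ≺_w y iff there exists a formula B ∈ y such that for all formulas A ∈ x, (A ⇇ B) ∈ w), each relation ≺_w is centered (for all x,y ∈ Δ with x ≠ y, x ≺_x y) and modular (if x ≺_w y and u ∈ Δ, then x ≺_w u or u ≺_w y). -/

import Mathlib

/-- Formulas of the language L_CSL: propositional variables, ⊥, negation,
conjunction, and the comparative similarity connective `cls` (A ⇇ B). -/
inductive CSLForm : Type
  | var : ℕ → CSLForm
  | bot : CSLForm
  | neg : CSLForm → CSLForm
  | and : CSLForm → CSLForm → CSLForm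
  | cls : CSLForm → CSLForm → CSLForm

namespace CSLForm

def top : CSLForm := neg bot
def or (A B : CSLForm) : CSLForm := neg (and (neg A) (neg B))
def imp (A B : CSLForm) : CSLForm := or (neg A) B

end CSLForm

/-- A boolean valuation respecting the classical connectives
(⇇-formulas and variables are treated as atoms). -/
def IsBoolVal (v : CSLForm → Bool) : Prop :=
  v .bot = false ∧ (∀ A, v (.neg A) = !v A) ∧ (∀ A B, v (.and A B) = (v A && v B))

/-- Classical tautologies of L_CSL. -/
def CSLTautology (A : CSLForm) : Prop := ∀ v, IsBoolVal v → v A = true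

/-- The Hilbert system CSMS. -/
inductive CSMS : CSLForm → Prop
  | taut {A : CSLForm} : CSLTautology A → CSMS A
  | mp {A B : CSLForm} : CSMS (A.imp B) → CSMS A → CSMS B
  | mon {A B : CSLForm} (C : CSLForm) : CSMS (A.imp B) → CSMS ((A.cls C).imp (B.cls C))
  | ax1 (A B : CSLForm) : CSMS ((A.cls B).neg.or (B.cls A).neg)
  | ax2 (A B C : CSLForm) : CSMS ((A.cls B).imp ((A.cls C).or (C.cls B)))
  | ax3 (A B : CSLForm) : CSMS ((A.and B.neg).imp (A.cls B))
  | ax4 (A B : CSLForm) : CSMS ((A.cls B).imp B.neg)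
  | ax5 (A B C : CSLForm) : CSMS (((A.cls B).and (A.cls C)).imp (A.cls (B.or C)))
  | ax6 (A : CSLForm) : CSMS ((A.cls .bot).imp (((A.cls .bot).neg.cls .bot).neg))

/-- Semantic extension of a formula, given preferential relations
`pref w x y` (meaning x ≺_w y) and a valuation of propositional variables. -/
def prefEval {W : Type} (pref : W → W → W → Prop) (val : ℕ → Set W) :
    CSLForm → Set W
  | .var i => val i
  | .bot => ∅
  | .neg A => (prefEval pref val A)ᶜ
  | .and A B => prefEval pref val A ∩ prefEval pref val B
  | .cls A B =>
      {w | ∃ x ∈ prefEval pref val A, ∀ y ∈ prefEval pref val B, pref w x y}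

/-- A CSL-preferential model. -/
structure CSLPrefModel (W : Type) where
  ne : Nonempty W
  pref : W → W → W → Prop
  modular : ∀ w x y z, pref w x y → pref w z y ∨ pref w x z
  centered : ∀ w x, x = w ∨ pref w w x
  limit : ∀ w (X : Set W), X.Nonempty → {y ∈ X | ∀ z, pref w z y → z ∉ X}.Nonempty
  val : ℕ → Set W

def CSLPrefModel.eval {W : Type} (M : CSLPrefModel W) : CSLForm → Set W :=
  prefEval M.pref M.val

/-- Distance from a point to a set, in ℝ≥0∞ (so that it is ∞ on the empty set). -/
noncomputable def setDist {W : Type} (d : W → W → ℝ) (w : W) (X : Set W) : ENNReal :=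
  ⨅ x ∈ X, ENNReal.ofReal (d w x)

/-- A CSL-distance minspace model. -/
structure CSLMinModel (W : Type) where
  ne : Nonempty W
  dist : W → W → ℝ
  dist_nonneg : ∀ x y, 0 ≤ dist x y
  dist_eq_zero : ∀ x y, dist x y = 0 ↔ x = y
  min_attained : ∀ (w : W) (X : Set W), X.Nonempty → ∃ x ∈ X, ∀ y ∈ X, dist w x ≤ dist w y
  val : ℕ → Set W

noncomputable def CSLMinModel.eval {W : Type} (M : CSLMinModel W) : CSLForm → Set W
  | .var i => M.val i
  | .bot => ∅
  | .neg A => (M.eval A)ᶜ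
  | .and A B => M.eval A ∩ M.eval B
  | .cls A B => {w | setDist M.dist w (M.eval A) < setDist M.dist w (M.eval B)}

/-- Iterated disjunction of a list of formulas. -/
def bigOr : List CSLForm → CSLForm
  | [] => .bot
  | [A] => A
  | A :: B :: rest => A.or (bigOr (B :: rest))

/-- Iterated conjunction of a list of formulas. -/
def bigAnd : List CSLForm → CSLForm
  | [] => .top
  | [A] => A
  | A :: B :: rest => A.and (bigAnd (B :: rest))

/-- Γ is inconsistent wrt CSMS: there are A₁,…,Aₙ ∈ Γ (n ≥ 1) with ⊢ ¬A₁ ⊔ … ⊔ ¬Aₙ. -/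
def Inconsistent (Γ : Set CSLForm) : Prop :=
  ∃ L : List CSLForm, L ≠ [] ∧ (∀ A ∈ L, A ∈ Γ) ∧ CSMS (bigOr (L.map .neg))

def Consistent (Γ : Set CSLForm) : Prop := ¬ Inconsistent Γ

def MaxConsistent (Γ : Set CSLForm) : Prop :=
  Consistent Γ ∧ ∀ A, A ∉ Γ → Inconsistent (insert A Γ)

/-- w^A = {¬B | (A ⇇ B) ∈ w}. -/
def projSet (w : Set CSLForm) (A : CSLForm) : Set CSLForm :=
  {F | ∃ B, F = CSLForm.neg B ∧ (A.cls B) ∈ w}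

/-- R(x,y) iff every A ∈ y satisfies (A ⇇ ⊥) ∈ x. -/
def Rrel (x y : Set CSLForm) : Prop := ∀ A, A ∈ y → (A.cls .bot) ∈ x

/-- The canonical preferential relation: x ≺_w y iff
∃ B ∈ y such that ∀ A ∈ x, (A ⇇ B) ∈ w. -/
def canonPrec (w x y : Set CSLForm) : Prop :=
  ∃ B, B ∈ y ∧ ∀ A, A ∈ x → (A.cls B) ∈ w


-- ===================== auxiliary development =====================

deriving instance DecidableEq for CSLForm

open CSLForm

/-- A trivial "one-point" semantics used to show CSMS is consistent. -/
def uval : CSLForm → Prop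
  | .var _ => False
  | .bot => False
  | .neg A => ¬ uval A
  | .and A B => uval A ∧ uval B
  | .cls A B => uval A ∧ ¬ uval B

lemma uval_imp (A B : CSLForm) : uval (A.imp B) ↔ (uval A → uval B) := by
  simp [CSLForm.imp, CSLForm.or, uval]

lemma uval_or (A B : CSLForm) : uval (A.or B) ↔ (uval A ∨ uval B) := by
  simp [CSLForm.or, uval]; tauto

lemma uval_csms {A : CSLForm} (h : CSMS A) : uval A := by
  induction h with
  | @taut A ht =>
      classical
      have hb : IsBoolVal (fun B => decide (uval B)) := by
        refine ⟨decide_eq_false (by simp [uval]), fun A => ?_, fun A B => ?_⟩ <;> simp only [uval] <;>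
          by_cases h1 : uval A <;> (try by_cases h2 : uval B) <;> simp [h1, *]
      have := ht _ hb
      simpa using this
  | mp h1 h2 ih1 ih2 => exact (uval_imp _ _).1 ih1 ih2
  | mon C h ih =>
      rw [uval_imp] at ih ⊢
      simp only [uval]; tauto
  | ax1 A B => rw [uval_or]; simp [uval]; tauto
  | ax2 A B C => rw [uval_imp, uval_or]; simp [uval]; tauto
  | ax3 A B => rw [uval_imp]; simp [uval]
  | ax4 A B => rw [uval_imp]; simp [uval]
  | ax5 A B C => rw [uval_imp, ]; simp [uval, uval_or]; tauto
  | ax6 A => rw [uval_imp]; simp [uval]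

lemma csms_consistent : ¬ CSMS .bot := fun h => uval_csms h

section BoolVal

variable {v : CSLForm → Bool}

lemma v_or (hv : IsBoolVal v) (A B : CSLForm) : v (A.or B) = (v A || v B) := by
  simp only [CSLForm.or, hv.2.1, hv.2.2]
  cases v A <;> cases v B <;> rfl

lemma v_imp (hv : IsBoolVal v) (A B : CSLForm) : v (A.imp B) = (!v A || v B) := by
  simp only [CSLForm.imp, v_or hv, hv.2.1]

lemma v_top (hv : IsBoolVal v) : v .top = true := by
  simp [CSLForm.top, hv.2.1, hv.1]

lemma v_bigAnd (hv : IsBoolVal v) : ∀ L : List CSLForm, v (bigAnd L) = L.all v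
  | [] => by simp [bigAnd, v_top hv]
  | [A] => by simp [bigAnd]
  | A :: B :: rest => by
      rw [bigAnd, hv.2.2, v_bigAnd hv (B :: rest)]
      simp only [List.all_cons]

lemma v_bigOr (hv : IsBoolVal v) : ∀ L : List CSLForm, v (bigOr L) = L.any v
  | [] => by simp [bigOr, hv.1]
  | [A] => by simp [bigOr]
  | A :: B :: rest => by
      rw [bigOr, v_or hv, v_bigOr hv (B :: rest)]
      simp only [List.any_cons]

lemma v_bigOr_neg (hv : IsBoolVal v) (L : List CSLForm) :
    v (bigOr (L.map .neg)) = L.any (fun B => !v B) := by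
  rw [v_bigOr hv]
  induction L with
  | nil => simp
  | cons A L ih => simp [hv.2.1, ih]

end BoolVal

-- tautologies
lemma taut_imp_top_imp (A : CSLForm) : CSLTautology (A.imp (CSLForm.top.imp A)) := by
  intro v hv
  rw [v_imp hv, v_imp hv, v_top hv]
  cases v A <;> rfl

lemma taut_id (A : CSLForm) : CSLTautology (A.imp A) := by
  intro v hv; rw [v_imp hv]; cases v A <;> rfl

lemma taut_append (L₁ L₂ : List CSLForm) (A B : CSLForm) :
    CSLTautology (((bigAnd L₁).imp (A.imp B)).imp
      (((bigAnd L₂).imp A).imp ((bigAnd (L₁ ++ L₂)).imp B))) := by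
  intro v hv
  simp only [v_imp hv, v_bigAnd hv, List.all_append]
  cases L₁.all v <;> cases L₂.all v <;> cases v A <;> cases v B <;> rfl

lemma taut_refute (L : List CSLForm) (A : CSLForm) :
    CSLTautology ((bigOr (L.map .neg)).imp
      ((bigAnd (L.filter (· ≠ A))).imp A.neg)) := by
  intro v hv
  simp only [v_imp hv, v_bigOr_neg hv, v_bigAnd hv, hv.2.1]
  cases hA : v A with
  | false => simp
  | true =>
    cases hany : L.any (fun B => !v B) with
    | false => simp
    | true =>
      obtain ⟨B, hBL, hB⟩ := List.any_eq_true.mp hany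
      have hBA : B ≠ A := by
        rintro rfl; rw [hA] at hB; simp at hB
      have hfil : (L.filter (fun x => x ≠ A)).all v = false := by
        simp only [List.all_eq_false, List.mem_filter]
        exact ⟨B, ⟨hBL, by simp [hBA]⟩, by simpa using hB⟩
      rw [hfil]
      simp

lemma taut_neglist (L : List CSLForm) :
    CSLTautology (((bigAnd L).imp .bot).imp (bigOr (L.map .neg))) := by
  intro v hv
  simp only [v_imp hv, v_bigOr_neg hv, v_bigAnd hv, hv.1]
  cases hall : L.all v with
  | true =>
    have : L.any (fun B => !v B) = false := by
      rw [List.any_eq_false]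
      intro B hB
      simp [List.all_eq_true.mp hall B hB]
    simp [this]
  | false =>
    obtain ⟨B, hBL, hB⟩ := List.all_eq_false.mp hall
    have : L.any (fun B => !v B) = true :=
      List.any_eq_true.mpr ⟨B, hBL, by simpa using hB⟩
    simp [this]

lemma taut_and_intro (A B : CSLForm) :
    CSLTautology (A.imp (B.imp (A.and B))) := by
  intro v hv
  simp only [v_imp hv, hv.2.2]
  cases v A <;> cases v B <;> rfl

lemma taut_absurd (A : CSLForm) : CSLTautology (A.imp (A.neg.imp .bot)) := by
  intro v hv
  simp only [v_imp hv, hv.2.1, hv.1]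
  cases v A <;> rfl

lemma taut_or_elim (A B : CSLForm) :
    CSLTautology ((A.or B).imp (A.neg.imp (B.neg.imp .bot))) := by
  intro v hv
  simp only [v_imp hv, v_or hv, hv.2.1, hv.1]
  cases v A <;> cases v B <;> rfl

lemma taut_dneg (A : CSLForm) : CSLTautology (A.imp A.neg.neg) := by
  intro v hv
  simp only [v_imp hv, hv.2.1]
  cases v A <;> rfl

-- derivability from a set
def Deriv (x : Set CSLForm) (A : CSLForm) : Prop :=
  ∃ L : List CSLForm, (∀ B ∈ L, B ∈ x) ∧ CSMS ((bigAnd L).imp A)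

lemma deriv_of_csms {x : Set CSLForm} {A : CSLForm} (h : CSMS A) : Deriv x A :=
  ⟨[], by simp, CSMS.mp (CSMS.taut (taut_imp_top_imp A)) h⟩

lemma deriv_of_mem {x : Set CSLForm} {A : CSLForm} (h : A ∈ x) : Deriv x A :=
  ⟨[A], by simpa using h, CSMS.taut (taut_id A)⟩

lemma deriv_mp {x : Set CSLForm} {A B : CSLForm}
    (h1 : Deriv x (A.imp B)) (h2 : Deriv x A) : Deriv x B := by
  obtain ⟨L₁, hL₁, hc₁⟩ := h1
  obtain ⟨L₂, hL₂, hc₂⟩ := h2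
  refine ⟨L₁ ++ L₂, ?_, ?_⟩
  · intro C hC
    rcases List.mem_append.1 hC with h | h
    · exact hL₁ C h
    · exact hL₂ C h
  · exact CSMS.mp (CSMS.mp (CSMS.taut (taut_append L₁ L₂ A B)) hc₁) hc₂

lemma deriv_neg_of_not_mem {x : Set CSLForm} (hx : MaxConsistent x) {A : CSLForm}
    (h : A ∉ x) : Deriv x A.neg := by
  classical
  obtain ⟨L, -, hLmem, hL⟩ := hx.2 A h
  refine ⟨L.filter (· ≠ A), ?_, CSMS.mp (CSMS.taut (taut_refute L A)) hL⟩
  intro B hB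
  have h1 := List.mem_filter.1 hB
  rcases hLmem B h1.1 with h | h
  · exact absurd h (by simpa using h1.2)
  · exact h

lemma not_deriv_bot {x : Set CSLForm} (hx : MaxConsistent x) : ¬ Deriv x .bot := by
  rintro ⟨L, hLmem, hL⟩
  have hOr : CSMS (bigOr (L.map .neg)) := CSMS.mp (CSMS.taut (taut_neglist L)) hL
  rcases List.eq_nil_or_concat L with rfl | -
  · exact csms_consistent (by simpa [bigOr] using hOr)
  · rcases Classical.em (L = []) with rfl | hne
    · exact csms_consistent (by simpa [bigOr] using hOr)
    · exact hx.1 ⟨L, hne, hLmem, hOr⟩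

lemma mem_of_deriv {x : Set CSLForm} (hx : MaxConsistent x) {A : CSLForm}
    (h : Deriv x A) : A ∈ x := by
  by_contra hA
  have h1 : Deriv x A.neg := deriv_neg_of_not_mem hx hA
  have h2 : Deriv x .bot :=
    deriv_mp (deriv_mp (deriv_of_csms (CSMS.taut (taut_absurd A))) h) h1
  exact not_deriv_bot hx h2

lemma mem_imp {x : Set CSLForm} (hx : MaxConsistent x) {A B : CSLForm}
    (h : CSMS (A.imp B)) (hA : A ∈ x) : B ∈ x :=
  mem_of_deriv hx (deriv_mp (deriv_of_csms h) (deriv_of_mem hA))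

lemma mem_and {x : Set CSLForm} (hx : MaxConsistent x) {A B : CSLForm}
    (hA : A ∈ x) (hB : B ∈ x) : (A.and B) ∈ x :=
  mem_of_deriv hx (deriv_mp (deriv_mp (deriv_of_csms (CSMS.taut (taut_and_intro A B)))
    (deriv_of_mem hA)) (deriv_of_mem hB))

lemma neg_mem_of_not_mem {x : Set CSLForm} (hx : MaxConsistent x) {A : CSLForm}
    (h : A ∉ x) : A.neg ∈ x :=
  mem_of_deriv hx (deriv_neg_of_not_mem hx h)

lemma or_elim_mem {x : Set CSLForm} (hx : MaxConsistent x) {A B : CSLForm}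
    (h : (A.or B) ∈ x) : A ∈ x ∨ B ∈ x := by
  by_contra hc
  push_neg at hc
  have hnA : A.neg ∈ x := neg_mem_of_not_mem hx hc.1
  have hnB : B.neg ∈ x := neg_mem_of_not_mem hx hc.2
  have : Deriv x .bot :=
    deriv_mp (deriv_mp (deriv_mp (deriv_of_csms (CSMS.taut (taut_or_elim A B)))
      (deriv_of_mem h)) (deriv_of_mem hnA)) (deriv_of_mem hnB)
  exact not_deriv_bot hx this

-- ===================== end auxiliary development =====================

/-- in the canonical model over a maximal consistent set z,
each relation ≺_w is centered and modular. -/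
theorem canonical_centered_modular (z : Set CSLForm) (hz : MaxConsistent z) :
    (∀ x ∈ {u : Set CSLForm | MaxConsistent u ∧ Rrel z u},
     ∀ y ∈ {u : Set CSLForm | MaxConsistent u ∧ Rrel z u},
       x ≠ y → canonPrec x x y) ∧
    (∀ w ∈ {u : Set CSLForm | MaxConsistent u ∧ Rrel z u},
     ∀ x ∈ {u : Set CSLForm | MaxConsistent u ∧ Rrel z u},
     ∀ y ∈ {u : Set CSLForm | MaxConsistent u ∧ Rrel z u},
     ∀ v ∈ {u : Set CSLForm | MaxConsistent u ∧ Rrel z u},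
       canonPrec w x y → canonPrec w x v ∨ canonPrec w v y) := by
  constructor
  · rintro x ⟨hx, -⟩ y ⟨hy, -⟩ hxy
    have key : ∀ B : CSLForm, B ∈ y → B ∉ x → canonPrec x x y := by
      intro B hBy hBx
      refine ⟨B, hBy, fun A hA => ?_⟩
      exact mem_imp hx (CSMS.ax3 A B) (mem_and hx hA (neg_mem_of_not_mem hx hBx))
    have hdiff : ∃ C, (C ∈ x ∧ C ∉ y) ∨ (C ∈ y ∧ C ∉ x) := by
      by_contra h
      push_neg at h
      exact hxy (Set.ext fun C => ⟨(h C).1, (h C).2⟩)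
    obtain ⟨C, hC⟩ := hdiff
    rcases hC with ⟨hCx, hCy⟩ | ⟨hCy, hCx⟩
    · have hnCy : C.neg ∈ y := neg_mem_of_not_mem hy hCy
      have hnCx : C.neg ∉ x := fun h =>
        not_deriv_bot hx (deriv_mp (deriv_mp (deriv_of_csms (CSMS.taut (taut_absurd C)))
          (deriv_of_mem hCx)) (deriv_of_mem h))
      exact key C.neg hnCy hnCx
    · exact key C hCy hCx
  · rintro w ⟨hw, -⟩ x - y - v - ⟨B, hBy, hB⟩
    by_cases hxv : canonPrec w x v
    · exact Or.inl hxv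
    · right
      refine ⟨B, hBy, fun C hCv => ?_⟩
      have hA : ∃ A, A ∈ x ∧ (A.cls C) ∉ w := by
        by_contra h
        push_neg at h
        exact hxv ⟨C, hCv, h⟩
      obtain ⟨A, hAx, hAC⟩ := hA
      have h2 : ((A.cls C).or (C.cls B)) ∈ w := mem_imp hw (CSMS.ax2 A B C) (hB A hAx)
      rcases or_elim_mem hw h2 with h | h
      · exact absurd h hAC
      · exact h
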